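/- Let I be an ideal of F_q[x_1,…,x_n] containing x_i^q − x_i for all i, and let (a_1,…,a_n) ∈ F_q^n. Then I equals the ideal (x_1 − a_1, …, x_n − a_n) if and only if (a_1,…,a_n) is the unique common zero of I in F_q^n. -/

import Mathlib

open MvPolynomial

private lemma stmt3_sub_C_eval_mem_span {F : Type*} [CommRing F] {n : ℕ} (a : Fin n → F)
    (f : MvPolynomial (Fin n) F) :
    f - C (eval a f) ∈ Ideal.span (Set.range fun i : Fin n => X i - C (a i)) := by
  induction f using MvPolynomial.induction_on with
  | C c => simp
  | add f g hf hg =>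
      have h := Ideal.add_mem _ hf hg
      have : f + g - C (eval a (f + g)) =
          (f - C (eval a f)) + (g - C (eval a g)) := by
        rw [map_add, map_add]; ring
      rw [this]; exact h
  | mul_X f i hf =>
      have h1 : (X i - C (a i)) ∈
          Ideal.span (Set.range fun i : Fin n => X i - C (a i)) :=
        Ideal.subset_span ⟨i, rfl⟩
      have : f * X i - C (eval a (f * X i)) =
          f * (X i - C (a i)) + C (a i) * (f - C (eval a f)) := by
        rw [map_mul, eval_X, map_mul]; ring
      rw [this]
      exact Ideal.add_mem _ (Ideal.mul_mem_left _ _ h1) (Ideal.mul_mem_left _ _ hf)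

private lemma stmt3_mem_span_iff {F : Type*} [CommRing F] {n : ℕ} (a : Fin n → F)
    (f : MvPolynomial (Fin n) F) :
    f ∈ Ideal.span (Set.range fun i : Fin n => X i - C (a i)) ↔ eval a f = 0 := by
  constructor
  · intro hf
    have : Ideal.span (Set.range fun i : Fin n => X i - C (a i)) ≤
        RingHom.ker (eval a) := by
      rw [Ideal.span_le]
      rintro _ ⟨i, rfl⟩
      simp [RingHom.mem_ker]
    simpa [RingHom.mem_ker] using this hf
  · intro hf
    have := stmt3_sub_C_eval_mem_span a f
    rw [hf] at this
    simpa using this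

private lemma stmt3_span_eq_vanishing {F : Type*} [Field F] {n : ℕ} (a : Fin n → F) :
    Ideal.span (Set.range fun i : Fin n => X i - C (a i)) =
      MvPolynomial.vanishingIdeal F {a} := by
  ext f
  rw [stmt3_mem_span_iff, mem_vanishingIdeal_singleton_iff]
  exact Iff.rfl

private lemma stmt3_prod_eq {F : Type*} [Field F] [Fintype F] {n : ℕ} (i : Fin n) :
    (∏ c : F, (X i - C c)) =
      (X i : MvPolynomial (Fin n) F) ^ Fintype.card F - X i := by
  classical
  have hq : 1 < Fintype.card F := Fintype.one_lt_card
  have hmonic : (Polynomial.X ^ Fintype.card F - Polynomial.X : Polynomial F).Monic := by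
    apply Polynomial.monic_X_pow_sub
    exact lt_of_le_of_lt Polynomial.degree_X_le (by exact_mod_cast hq)
  have hcard : Multiset.card (Polynomial.X ^ Fintype.card F -
      Polynomial.X : Polynomial F).roots =
      (Polynomial.X ^ Fintype.card F - Polynomial.X : Polynomial F).natDegree := by
    rw [FiniteField.roots_X_pow_card_sub_X, FiniteField.X_pow_card_sub_X_natDegree_eq F hq]
    simp [Finset.card_univ]
  have hprod := Polynomial.prod_multiset_X_sub_C_of_monic_of_roots_card_eq hmonic hcard
  rw [FiniteField.roots_X_pow_card_sub_X] at hprod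
  have huni : (∏ c : F, (Polynomial.X - Polynomial.C c)) =
      (Polynomial.X ^ Fintype.card F - Polynomial.X : Polynomial F) := by
    rw [← hprod, Finset.prod_eq_multiset_prod]
  have := congrArg (Polynomial.aeval (X i : MvPolynomial (Fin n) F)) huni
  simpa [map_prod] using this

private lemma stmt3_pow_card_sub_mem {F : Type*} [Field F] [Fintype F] {n : ℕ}
    (I : Ideal (MvPolynomial (Fin n) F))
    (hI : ∀ i : Fin n, X i ^ Fintype.card F - X i ∈ I)
    (f : MvPolynomial (Fin n) F) : f ^ Fintype.card F - f ∈ I := by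
  have hp : Fact (ringChar F).Prime := ⟨CharP.char_is_prime F (ringChar F)⟩
  obtain ⟨k, -, hk⟩ := FiniteField.card F (ringChar F)
  induction f using MvPolynomial.induction_on with
  | C c => rw [← map_pow, FiniteField.pow_card]; simp
  | add f g hf hg =>
      have hfr : (f + g) ^ Fintype.card F = f ^ Fintype.card F + g ^ Fintype.card F := by
        rw [hk]; exact add_pow_char_pow f g (ringChar F) k
      have h := Ideal.add_mem _ hf hg
      have : (f + g) ^ Fintype.card F - (f + g) =
          (f ^ Fintype.card F - f) + (g ^ Fintype.card F - g) := by
        rw [hfr]; ring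
      rw [this]; exact h
  | mul_X f i hf =>
      have : (f * X i) ^ Fintype.card F - f * X i =
          f ^ Fintype.card F * (X i ^ Fintype.card F - X i) +
            (f ^ Fintype.card F - f) * X i := by ring
      rw [this]
      exact Ideal.add_mem _ (Ideal.mul_mem_left _ _ (hI i)) (Ideal.mul_mem_right _ _ hf)

private lemma stmt3_radical_le {F : Type*} [Field F] [Fintype F] {n : ℕ}
    (I : Ideal (MvPolynomial (Fin n) F))
    (hI : ∀ i : Fin n, X i ^ Fintype.card F - X i ∈ I) :
    I.radical ≤ I := by
  intro f hf
  obtain ⟨m, hm⟩ := hf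
  set q := Fintype.card F with hq
  have hq1 : 1 < q := Fintype.one_lt_card
  have hpow : ∀ j : ℕ, f ^ q ^ j - f ∈ I := by
    intro j
    induction j with
    | zero => simp
    | succ j ih =>
        have h1 : (f ^ q ^ j) ^ q - f ^ q ^ j ∈ I := stmt3_pow_card_sub_mem I hI _
        have : f ^ q ^ (j + 1) - f =
            ((f ^ q ^ j) ^ q - f ^ q ^ j) + (f ^ q ^ j - f) := by
          rw [pow_succ, pow_mul]; ring
        rw [this]; exact Ideal.add_mem _ h1 ih
  have hle : m ≤ q ^ m := (Nat.lt_pow_self hq1 (n := m)).le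
  have hmem : f ^ q ^ m ∈ I := by
    have : f ^ q ^ m = f ^ m * f ^ (q ^ m - m) := by
      rw [← pow_add, Nat.add_sub_cancel' hle]
    rw [this]
    exact Ideal.mul_mem_right _ _ hm
  have := Ideal.sub_mem I hmem (hpow m)
  simpa using this

/-- Let `I` be an ideal of `F_q[x_1,…,x_n]` containing `x_i^q − x_i` for all `i`,
and let `a ∈ F_q^n`. Then `I = (x_1 − a_1, …, x_n − a_n)` iff `a` is the unique common zero
of `I` in `F_q^n`. -/
theorem stmt_3 {F : Type*} [Field F] [Fintype F] {n : ℕ}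
    (I : Ideal (MvPolynomial (Fin n) F))
    (hI : ∀ i : Fin n, X i ^ Fintype.card F - X i ∈ I) (a : Fin n → F) :
    I = Ideal.span (Set.range fun i : Fin n => X i - C (a i)) ↔
      (∀ P ∈ I, eval a P = 0) ∧
        ∀ b : Fin n → F, (∀ P ∈ I, eval b P = 0) → b = a := by
  constructor
  · intro hIeq
    constructor
    · intro P hP
      rw [hIeq, stmt3_mem_span_iff] at hP
      exact hP
    · intro b hb
      funext i
      have hXi : X i - C (a i) ∈ I := by
        rw [hIeq]; exact Ideal.subset_span ⟨i, rfl⟩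
      have := hb _ hXi
      rw [map_sub, eval_X, eval_C, sub_eq_zero] at this
      exact this
  · rintro ⟨h1, h2⟩
    have hle : I ≤ Ideal.span (Set.range fun i : Fin n => X i - C (a i)) := by
      intro f hf
      rw [stmt3_mem_span_iff]
      exact h1 f hf
    -- every prime containing `I` equals the span ideal
    have hprime : ∀ P : Ideal (MvPolynomial (Fin n) F), P.IsPrime → I ≤ P →
        P = Ideal.span (Set.range fun i : Fin n => X i - C (a i)) := by
      intro P hP hIP
      have hex : ∀ i : Fin n, ∃ c : F, X i - C c ∈ P := by
        intro i
        have hm : (∏ c : F, (X i - C c)) ∈ P := by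
          rw [stmt3_prod_eq i]; exact hIP (hI i)
        have := (Ideal.IsPrime.prod_mem_iff (hp := hP)).mp hm
        obtain ⟨c, -, hc⟩ := this
        exact ⟨c, hc⟩
      choose b hb using hex
      have hsub : Ideal.span (Set.range fun i : Fin n => X i - C (b i)) ≤ P := by
        rw [Ideal.span_le]; rintro _ ⟨i, rfl⟩; exact hb i
      have hmax : (Ideal.span (Set.range fun i : Fin n => X i - C (b i))).IsMaximal := by
        rw [stmt3_span_eq_vanishing]
        exact inferInstance
      have hPeq : Ideal.span (Set.range fun i : Fin n => X i - C (b i)) = P :=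
        hmax.eq_of_le hP.ne_top hsub
      have hba : b = a := by
        apply h2
        intro f hf
        have : f ∈ Ideal.span (Set.range fun i : Fin n => X i - C (b i)) := by
          rw [hPeq]; exact hIP hf
        rw [stmt3_mem_span_iff] at this
        exact this
      rw [← hPeq, hba]
    -- hence the radical of `I` is the span ideal, and `I` is radical
    have hrad : I.radical = Ideal.span (Set.range fun i : Fin n => X i - C (a i)) := by
      rw [Ideal.radical_eq_sInf]
      apply le_antisymm
      · apply sInf_le
        refine ⟨hle, ?_⟩
        have : (Ideal.span (Set.range fun i : Fin n => X i - C (a i))).IsMaximal := by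
          rw [stmt3_span_eq_vanishing]
          exact inferInstance
        exact this.isPrime
      · apply le_sInf
        rintro P ⟨hIP, hP⟩
        rw [← hprime P hP hIP]
    apply le_antisymm hle
    rw [← hrad]
    exact stmt3_radical_le I hI
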